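/- Uniqueness of the faction/core data: let n ≥ 3 and let M : Fin n → Fin n → Bool be an absorbing state. If (P, C) and (P', C') are two pairs each consisting of a finite partition of Fin n and a core set such that every block meets the core set, and such that for all distinct i, j: M i j = true if and only if i and j lie in the same block and j lies in the core set, then P = P' and C = C'. -/
import Mathlib

/-- A state `M` is absorbing if for all pairwise distinct agents `a z y`,
if `z` trusts `a` then `z` already agrees with `a` about `y`. -/
def Absorbing {n : ℕ} (M : Fin n → Fin n → Bool) : Prop :=
  ∀ a z y : Fin n, a ≠ z → a ≠ y → z ≠ y → M z a = true → M z y = M a y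

private lemma core_char {n : ℕ} (M : Fin n → Fin n → Bool)
    (P : Finpartition (Finset.univ : Finset (Fin n))) (C : Finset (Fin n))
    (hcore : ∀ F ∈ P.parts, (F ∩ C).Nonempty)
    (hchar : ∀ i j : Fin n, i ≠ j →
      (M i j = true ↔ (∃ F ∈ P.parts, i ∈ F ∧ j ∈ F) ∧ j ∈ C))
    (j : Fin n) :
    j ∈ C ↔ (∃ i, i ≠ j ∧ M i j = true) ∨ (∀ i, i ≠ j → M i j ≠ true ∧ M j i ≠ true) := by
  constructor
  · intro hj
    obtain ⟨F, hF, hjF⟩ := P.exists_mem (Finset.mem_univ j)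
    by_cases h : ∃ i, i ≠ j ∧ i ∈ F
    · obtain ⟨i, hij, hiF⟩ := h
      exact Or.inl ⟨i, hij, (hchar i j hij).mpr ⟨⟨F, hF, hiF, hjF⟩, hj⟩⟩
    · push_neg at h
      refine Or.inr fun i hij => ⟨?_, ?_⟩
      · intro hM
        obtain ⟨⟨G, hG, hiG, hjG⟩, _⟩ := (hchar i j hij).mp hM
        exact h i hij (P.eq_of_mem_parts hG hF hjG hjF ▸ hiG)
      · intro hM
        obtain ⟨⟨G, hG, hjG, hiG⟩, _⟩ := (hchar j i hij.symm).mp hM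
        exact h i hij (P.eq_of_mem_parts hG hF hjG hjF ▸ hiG)
  · rintro (⟨i, hij, hM⟩ | h)
    · exact ((hchar i j hij).mp hM).2
    · obtain ⟨F, hF, hjF⟩ := P.exists_mem (Finset.mem_univ j)
      obtain ⟨c, hc⟩ := hcore F hF
      rw [Finset.mem_inter] at hc
      by_cases hcj : c = j
      · exact hcj ▸ hc.2
      · exact absurd ((hchar j c (Ne.symm hcj)).mpr ⟨⟨F, hF, hjF, hc.1⟩, hc.2⟩)
          (h c (fun e => hcj e)).2

private lemma part_char {n : ℕ} (M : Fin n → Fin n → Bool)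
    (P : Finpartition (Finset.univ : Finset (Fin n))) (C : Finset (Fin n))
    (hcore : ∀ F ∈ P.parts, (F ∩ C).Nonempty)
    (hchar : ∀ i j : Fin n, i ≠ j →
      (M i j = true ↔ (∃ F ∈ P.parts, i ∈ F ∧ j ∈ F) ∧ j ∈ C))
    (x y : Fin n) (hxy : x ≠ y) :
    (∃ F ∈ P.parts, x ∈ F ∧ y ∈ F) ↔
      (M x y = true ∨ M y x = true ∨ ∃ k, k ≠ x ∧ k ≠ y ∧ M x k = true ∧ M y k = true) := by
  constructor
  · rintro ⟨F, hF, hxF, hyF⟩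
    obtain ⟨c, hc⟩ := hcore F hF
    rw [Finset.mem_inter] at hc
    by_cases hcy : c = y
    · exact Or.inl ((hchar x y hxy).mpr ⟨⟨F, hF, hxF, hyF⟩, hcy ▸ hc.2⟩)
    by_cases hcx : c = x
    · exact Or.inr (Or.inl ((hchar y x hxy.symm).mpr ⟨⟨F, hF, hyF, hxF⟩, hcx ▸ hc.2⟩))
    · exact Or.inr (Or.inr ⟨c, hcx, hcy,
        (hchar x c (Ne.symm hcx)).mpr ⟨⟨F, hF, hxF, hc.1⟩, hc.2⟩,
        (hchar y c (Ne.symm hcy)).mpr ⟨⟨F, hF, hyF, hc.1⟩, hc.2⟩⟩)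
  · rintro (hM | hM | ⟨k, hkx, hky, h1, h2⟩)
    · exact ((hchar x y hxy).mp hM).1
    · obtain ⟨⟨F, hF, hyF, hxF⟩, _⟩ := ((hchar y x hxy.symm).mp hM)
      exact ⟨F, hF, hxF, hyF⟩
    · obtain ⟨⟨F, hF, hxF, hkF⟩, _⟩ := ((hchar x k (Ne.symm hkx)).mp h1)
      obtain ⟨⟨G, hG, hyG, hkG⟩, _⟩ := ((hchar y k (Ne.symm hky)).mp h2)
      exact ⟨F, hF, hxF, P.eq_of_mem_parts hG hF hkG hkF ▸ hyG⟩

private lemma parts_subset {n : ℕ} (M : Fin n → Fin n → Bool)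
    (P P' : Finpartition (Finset.univ : Finset (Fin n))) (C C' : Finset (Fin n))
    (hcore : ∀ F ∈ P.parts, (F ∩ C).Nonempty)
    (hchar : ∀ i j : Fin n, i ≠ j →
      (M i j = true ↔ (∃ F ∈ P.parts, i ∈ F ∧ j ∈ F) ∧ j ∈ C))
    (hcore' : ∀ F ∈ P'.parts, (F ∩ C').Nonempty)
    (hchar' : ∀ i j : Fin n, i ≠ j →
      (M i j = true ↔ (∃ F ∈ P'.parts, i ∈ F ∧ j ∈ F) ∧ j ∈ C'))
    (F : Finset (Fin n)) (hF : F ∈ P.parts) : F ∈ P'.parts := by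
  obtain ⟨x, hxF⟩ := P.nonempty_of_mem_parts hF
  obtain ⟨F', hF', hxF'⟩ := P'.exists_mem (Finset.mem_univ x)
  suffices h : F = F' by exact h ▸ hF'
  ext y
  by_cases hxy : x = y
  · subst hxy; simp [hxF, hxF']
  constructor
  · intro hyF
    have h1 : ∃ G ∈ P.parts, x ∈ G ∧ y ∈ G := ⟨F, hF, hxF, hyF⟩
    have h2 := (part_char M P' C' hcore' hchar' x y hxy).mpr
      ((part_char M P C hcore hchar x y hxy).mp h1)
    obtain ⟨G, hG, hxG, hyG⟩ := h2
    exact P'.eq_of_mem_parts hG hF' hxG hxF' ▸ hyG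
  · intro hyF'
    have h1 : ∃ G ∈ P'.parts, x ∈ G ∧ y ∈ G := ⟨F', hF', hxF', hyF'⟩
    have h2 := (part_char M P C hcore hchar x y hxy).mpr
      ((part_char M P' C' hcore' hchar' x y hxy).mp h1)
    obtain ⟨G, hG, hxG, hyG⟩ := h2
    exact P.eq_of_mem_parts hG hF hxG hxF ▸ hyG

/-- Uniqueness of the faction/core data of an absorbing state. -/
theorem faction_core_unique {n : ℕ} (hn : 3 ≤ n)
    (M : Fin n → Fin n → Bool) (hdiag : ∀ i, M i i = false)
    (habs : Absorbing M)
    (P P' : Finpartition (Finset.univ : Finset (Fin n)))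
    (C C' : Finset (Fin n))
    (hcore : ∀ F ∈ P.parts, (F ∩ C).Nonempty)
    (hchar : ∀ i j : Fin n, i ≠ j →
      (M i j = true ↔ (∃ F ∈ P.parts, i ∈ F ∧ j ∈ F) ∧ j ∈ C))
    (hcore' : ∀ F ∈ P'.parts, (F ∩ C').Nonempty)
    (hchar' : ∀ i j : Fin n, i ≠ j →
      (M i j = true ↔ (∃ F ∈ P'.parts, i ∈ F ∧ j ∈ F) ∧ j ∈ C')) :
    P = P' ∧ C = C' := by
  constructor
  · apply Finpartition.ext
    apply Finset.Subset.antisymm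
    · intro F hF
      exact parts_subset M P P' C C' hcore hchar hcore' hchar' F hF
    · intro F hF
      exact parts_subset M P' P C' C hcore' hchar' hcore hchar F hF
  · ext j
    rw [core_char M P C hcore hchar j, core_char M P' C' hcore' hchar' j]
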